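/- If φ ∈ S_d^* satisfies φ(f·g) = 0 for all g ∈ S_{d−r}, where f ∈ S_r is a product of r pairwise non-proportional linear forms L_1,...,L_r with zeros α_1,...,α_r, then φ is a linear combination of the evaluation functionals ev(α_1),...,ev(α_r). -/

import Mathlib

open MvPolynomial Finset

noncomputable section

def linForm (K : Type) [Field K] (c : Fin 2 → K) : MvPolynomial (Fin 2) K :=
  C (c 0) * X 0 + C (c 1) * X 1

/-- `α` is not a scalar multiple of `β` (for nonzero vectors: distinct points of `ℙ¹`). -/
def NonProp (K : Type) [Field K] (α β : Fin 2 → K) : Prop := ∀ t : K, α ≠ t • β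

/-- The Waring rank of a binary form: the least `r` such that `q` is a sum of `r`
`d`-th powers of linear forms. -/
def waringRank (K : Type) [Field K] (d : ℕ) (q : MvPolynomial (Fin 2) K) : ℕ :=
  sInf {r : ℕ | ∃ L : Fin r → Fin 2 → K, q = ∑ i, linForm K (L i) ^ d}

set_option linter.unusedSectionVars false

section Aux

variable {K : Type} [Field K]

lemma eval_linForm (c x : Fin 2 → K) : eval x (linForm K c) = c 0 * x 0 + c 1 * x 1 := by
  simp [linForm]

lemma linForm_isHomogeneous (c : Fin 2 → K) : (linForm K c).IsHomogeneous 1 :=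
  (isHomogeneous_C_mul_X (c 0) 0).add (isHomogeneous_C_mul_X (c 1) 1)

lemma funext2 {x y : Fin 2 → K} (h0 : x 0 = y 0) (h1 : x 1 = y 1) : x = y :=
  funext (Fin.forall_fin_two.mpr ⟨h0, h1⟩)

lemma fin2_ne_zero {v : Fin 2 → K} (hv : v ≠ 0) : v 0 ≠ 0 ∨ v 1 ≠ 0 := by
  by_contra h
  push_neg at h
  exact hv (funext2 h.1 h.2)

lemma line_lemma {c v x : Fin 2 → K} (hc : c ≠ 0) (hv : v ≠ 0)
    (hcv : c 0 * v 0 + c 1 * v 1 = 0) (hcx : c 0 * x 0 + c 1 * x 1 = 0) :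
    ∃ t : K, x = t • v := by
  rcases fin2_ne_zero hc with h0 | h1
  · have hv1 : v 1 ≠ 0 := by
      intro h
      rw [h, mul_zero, add_zero] at hcv
      exact hv (funext2 ((mul_eq_zero.mp hcv).resolve_left h0) h)
    refine ⟨x 1 / v 1, funext2 ?_ ?_⟩ <;> simp only [Pi.smul_apply, smul_eq_mul]
    · have hv0 : v 0 = -(c 1 * v 1) / c 0 := by field_simp; linear_combination hcv
      have hx0 : x 0 = -(c 1 * x 1) / c 0 := by field_simp; linear_combination hcx
      rw [hv0, hx0]; field_simp
    · field_simp
  · have hv0' : v 0 ≠ 0 := by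
      intro h
      rw [h, mul_zero, zero_add] at hcv
      exact hv (funext2 h ((mul_eq_zero.mp hcv).resolve_left h1))
    refine ⟨x 0 / v 0, funext2 ?_ ?_⟩ <;> simp only [Pi.smul_apply, smul_eq_mul]
    · field_simp
    · have hv1 : v 1 = -(c 0 * v 0) / c 1 := by field_simp; linear_combination hcv
      have hx1 : x 1 = -(c 0 * x 0) / c 1 := by field_simp; linear_combination hcx
      rw [hv1, hx1]; field_simp

lemma MvPolynomial.IsHomogeneous.eval_smul' {g : MvPolynomial (Fin 2) K} {n : ℕ}
    (hg : g.IsHomogeneous n) (t : K) (x : Fin 2 → K) :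
    eval (t • x) g = t ^ n * eval x g := by
  rw [eval_eq', eval_eq', Finset.mul_sum]
  refine Finset.sum_congr rfl fun d hd => ?_
  have hdn : ∑ i, d i = n := by
    have := hg (mem_support_iff.mp hd)
    rw [Finsupp.weight_apply, Finsupp.sum_fintype] at this
    · simpa using this
    · intro i; simp
  calc coeff d g * ∏ i, (t • x) i ^ d i
      = coeff d g * ∏ i, (t ^ d i * x i ^ d i) := by
        congr 1; refine Finset.prod_congr rfl fun i _ => ?_
        simp [mul_pow]
    _ = t ^ n * (coeff d g * ∏ i, x i ^ d i) := by
        rw [Finset.prod_mul_distrib, Finset.prod_pow_eq_pow_sum, hdn]; ring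

lemma linForm_ne_zero {c : Fin 2 → K} (hc : c ≠ 0) : linForm K c ≠ 0 := by
  intro h
  rcases fin2_ne_zero hc with h0 | h1
  · have := congrArg (coeff (Finsupp.single 0 1)) h
    simp [linForm, coeff_X', Finsupp.single_eq_single_iff] at this
    exact h0 this
  · have := congrArg (coeff (Finsupp.single 1 1)) h
    simp [linForm, coeff_X', Finsupp.single_eq_single_iff] at this
    exact h1 this

lemma prime_X0 : Prime (X 0 : MvPolynomial (Fin 2) K) := by
  have h : (MvPolynomial.finSuccEquiv K 1).toMulEquiv (X 0) =
      (Polynomial.X : Polynomial (MvPolynomial (Fin 1) K)) := finSuccEquiv_X_zero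
  rw [← MulEquiv.prime_iff (MvPolynomial.finSuccEquiv K 1).toMulEquiv, h]
  exact Polynomial.prime_X

def TA (c : Fin 2 → K) (h0 : c 0 ≠ 0) :
    MvPolynomial (Fin 2) K ≃ₐ[K] MvPolynomial (Fin 2) K :=
  AlgEquiv.ofAlgHom
    (aeval ![C (c 0) * X 0 + C (c 1) * X 1, X 1])
    (aeval ![C (c 0)⁻¹ * (X 0 - C (c 1) * X 1), X 1])
    (by
      have e1 : (C ((c 0)⁻¹) : MvPolynomial (Fin 2) K) * C (c 0) = 1 := by
        rw [← C_mul, inv_mul_cancel₀ h0, C_1]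
      have e2 : (C (c 0) : MvPolynomial (Fin 2) K) * C ((c 0)⁻¹) = 1 := by
        rw [← C_mul, mul_inv_cancel₀ h0, C_1]
      apply algHom_ext
      intro i
      fin_cases i <;> simp [mul_sub, mul_add] <;>
        first
          | linear_combination (X 0 : MvPolynomial (Fin 2) K) * e1
          | linear_combination ((X 0 : MvPolynomial (Fin 2) K) - C (c 1) * X 1) * e2
          | linear_combination (X 0 : MvPolynomial (Fin 2) K) * e2
          | linear_combination ((X 0 : MvPolynomial (Fin 2) K) - C (c 1) * X 1) * e1)
    (by
      have e1 : (C ((c 0)⁻¹) : MvPolynomial (Fin 2) K) * C (c 0) = 1 := by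
        rw [← C_mul, inv_mul_cancel₀ h0, C_1]
      have e2 : (C (c 0) : MvPolynomial (Fin 2) K) * C ((c 0)⁻¹) = 1 := by
        rw [← C_mul, mul_inv_cancel₀ h0, C_1]
      apply algHom_ext
      intro i
      fin_cases i <;> simp [mul_sub, mul_add] <;>
        first
          | linear_combination (X 0 : MvPolynomial (Fin 2) K) * e1
          | linear_combination ((X 0 : MvPolynomial (Fin 2) K) - C (c 1) * X 1) * e2
          | linear_combination (X 0 : MvPolynomial (Fin 2) K) * e2
          | linear_combination ((X 0 : MvPolynomial (Fin 2) K) - C (c 1) * X 1) * e1)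

def TB (c : Fin 2 → K) (h1 : c 1 ≠ 0) :
    MvPolynomial (Fin 2) K ≃ₐ[K] MvPolynomial (Fin 2) K :=
  AlgEquiv.ofAlgHom
    (aeval ![C (c 1) * X 1, X 0])
    (aeval ![X 1, C (c 1)⁻¹ * X 0])
    (by
      have e1 : (C ((c 1)⁻¹) : MvPolynomial (Fin 2) K) * C (c 1) = 1 := by
        rw [← C_mul, inv_mul_cancel₀ h1, C_1]
      have e2 : (C (c 1) : MvPolynomial (Fin 2) K) * C ((c 1)⁻¹) = 1 := by
        rw [← C_mul, mul_inv_cancel₀ h1, C_1]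
      apply algHom_ext
      intro i
      fin_cases i <;> simp <;>
        first
          | linear_combination ((X 1 : MvPolynomial (Fin 2) K) - X 0) * e1
          | linear_combination (X 0 : MvPolynomial (Fin 2) K) * e1
          | linear_combination (X 1 : MvPolynomial (Fin 2) K) * e1
          | linear_combination ((X 1 : MvPolynomial (Fin 2) K) - X 0) * e2
          | linear_combination (X 0 : MvPolynomial (Fin 2) K) * e2
          | linear_combination (X 1 : MvPolynomial (Fin 2) K) * e2)
    (by
      have e1 : (C ((c 1)⁻¹) : MvPolynomial (Fin 2) K) * C (c 1) = 1 := by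
        rw [← C_mul, inv_mul_cancel₀ h1, C_1]
      have e2 : (C (c 1) : MvPolynomial (Fin 2) K) * C ((c 1)⁻¹) = 1 := by
        rw [← C_mul, mul_inv_cancel₀ h1, C_1]
      apply algHom_ext
      intro i
      fin_cases i <;> simp <;>
        first
          | linear_combination ((X 0 : MvPolynomial (Fin 2) K) - X 1) * e2
          | linear_combination (X 1 : MvPolynomial (Fin 2) K) * e2
          | linear_combination (X 0 : MvPolynomial (Fin 2) K) * e2
          | linear_combination ((X 0 : MvPolynomial (Fin 2) K) - X 1) * e1
          | linear_combination (X 1 : MvPolynomial (Fin 2) K) * e1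
          | linear_combination (X 0 : MvPolynomial (Fin 2) K) * e1)

lemma prime_linForm {c : Fin 2 → K} (hc : c ≠ 0) : Prime (linForm K c) := by
  rcases eq_or_ne (c 0) 0 with h0 | h0
  · have h1 : c 1 ≠ 0 := by
      rcases fin2_ne_zero hc with h | h
      · exact absurd h0 h
      · exact h
    have := (MulEquiv.prime_iff (TB c h1).toMulEquiv).mpr (prime_X0 (K := K))
    have he : (TB c h1).toMulEquiv (X 0) = linForm K c := by
      simp [TB, linForm, h0]
    rwa [he] at this
  · have := (MulEquiv.prime_iff (TA c h0).toMulEquiv).mpr (prime_X0 (K := K))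
    have he : (TA c h0).toMulEquiv (X 0) = linForm K c := by
      simp [TA, linForm]
    rwa [he] at this

lemma linForm_dvd [IsAlgClosed K] {g : MvPolynomial (Fin 2) K} {n : ℕ}
    (hg : g.IsHomogeneous n) {c α : Fin 2 → K} (hc : c ≠ 0) (hα : α ≠ 0)
    (hcα : eval α (linForm K c) = 0) (hgα : eval α g = 0) : linForm K c ∣ g := by
  set P : Ideal (MvPolynomial (Fin 2) K) := Ideal.span {linForm K c} with hP
  have hPp : P.IsPrime :=
    (Ideal.span_singleton_prime (linForm_ne_zero hc)).mpr (prime_linForm hc)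
  have hmem : g ∈ vanishingIdeal K (zeroLocus K P) := by
    rw [mem_vanishingIdeal_iff]
    intro x hx
    change eval x g = 0
    have hLx : eval x (linForm K c) = 0 :=
      (mem_zeroLocus_iff.mp hx) _ (Ideal.subset_span rfl)
    rw [eval_linForm] at hLx hcα
    obtain ⟨t, rfl⟩ := line_lemma hc hα hcα hLx
    rw [hg.eval_smul', hgα, mul_zero]
  rw [MvPolynomial.IsPrime.vanishingIdeal_zeroLocus P] at hmem
  exact (Ideal.mem_span_singleton).mp hmem

lemma quot_homog {L g h : MvPolynomial (Fin 2) K} {n : ℕ}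
    (hL : L.IsHomogeneous 1) (hprime : Prime L) (hg : g.IsHomogeneous n)
    (heq : g = L * h) :
    ∃ h' : MvPolynomial (Fin 2) K, h'.IsHomogeneous (n - 1) ∧ g = L * h' := by
  by_cases hg0 : g = 0
  · exact ⟨0, isHomogeneous_zero _ _ _, by rw [hg0, mul_zero]⟩
  have hn1 : 1 ≤ n := by
    by_contra hn
    have hn0 : n = 0 := by omega
    subst hn0
    have hgc : homogeneousComponent 0 g = g := by
      have := homogeneousComponent_of_mem (m := 0) (n := 0)
        ((mem_homogeneousSubmodule 0 g).mpr hg)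
      simpa using this
    have hgC : g = C (coeff 0 g) := by
      conv_lhs => rw [← hgc, homogeneousComponent_zero]
    have ha0 : coeff 0 g ≠ 0 := fun h0 => hg0 (by rw [hgC, h0, C_0])
    have hunit : IsUnit g := by
      rw [hgC]
      exact IsUnit.of_mul_eq_one (C (coeff 0 g)⁻¹)
        (by rw [← C_mul, mul_inv_cancel₀ ha0, C_1])
    exact hprime.not_unit (isUnit_of_dvd_unit ⟨h, heq⟩ hunit)
  refine ⟨homogeneousComponent (n - 1) h, homogeneousComponent_isHomogeneous _ _, ?_⟩
  have hgdec : g = ∑ k ∈ range (h.totalDegree + 1), L * homogeneousComponent k h := by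
    rw [← Finset.mul_sum, sum_homogeneousComponent]; exact heq
  have hgc : homogeneousComponent n g = g := by
    have := homogeneousComponent_of_mem (m := n) (n := n)
      ((mem_homogeneousSubmodule n g).mpr hg)
    simpa using this
  have hcomp : ∀ k, homogeneousComponent n (L * homogeneousComponent k h) =
      if k = n - 1 then L * homogeneousComponent k h else 0 := by
    intro k
    have hhom : (L * homogeneousComponent k h).IsHomogeneous (1 + k) :=
      hL.mul (homogeneousComponent_isHomogeneous k h)
    have := homogeneousComponent_of_mem (m := n)
      ((mem_homogeneousSubmodule (1 + k) _).mpr hhom)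
    rw [this]
    congr 1
    apply propext
    constructor <;> intro hh <;> omega
  have key : g = if n - 1 ∈ range (h.totalDegree + 1)
      then L * homogeneousComponent (n - 1) h else 0 := by
    conv_lhs => rw [← hgc, hgdec]
    rw [map_sum]
    rw [Finset.sum_congr rfl (fun k _ => hcomp k)]
    exact Finset.sum_ite_eq' _ _ _
  by_cases hmem : n - 1 ∈ range (h.totalDegree + 1)
  · rw [if_pos hmem] at key; exact key
  · rw [if_neg hmem] at key; exact absurd key hg0

lemma factor_step [IsAlgClosed K] {g : MvPolynomial (Fin 2) K} {n : ℕ}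
    (hg : g.IsHomogeneous n) {c α : Fin 2 → K} (hc : c ≠ 0) (hα : α ≠ 0)
    (hcα : eval α (linForm K c) = 0) (hgα : eval α g = 0) :
    ∃ h : MvPolynomial (Fin 2) K, h.IsHomogeneous (n - 1) ∧ g = linForm K c * h := by
  obtain ⟨h, heq⟩ := linForm_dvd hg hc hα hcα hgα
  exact quot_homog (linForm_isHomogeneous c) (prime_linForm hc) hg heq

lemma div_many [IsAlgClosed K] {r d : ℕ} (c α : Fin r → Fin 2 → K)
    (hc : ∀ i, c i ≠ 0) (hα : ∀ i, α i ≠ 0)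
    (hzero : ∀ i, eval (α i) (linForm K (c i)) = 0)
    (hLne : ∀ i j, i ≠ j → eval (α j) (linForm K (c i)) ≠ 0)
    (s : Finset (Fin r)) :
    ∀ g : MvPolynomial (Fin 2) K, g.IsHomogeneous d → (∀ i ∈ s, eval (α i) g = 0) →
      ∃ h : MvPolynomial (Fin 2) K, h.IsHomogeneous (d - s.card) ∧
        g = (∏ i ∈ s, linForm K (c i)) * h := by
  classical
  induction s using Finset.induction_on with
  | empty =>
      intro g hg _
      exact ⟨g, by simpa using hg, by simp⟩
  | @insert a s ha ih =>
      intro g hg hvan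
      obtain ⟨h, hh, heq⟩ := ih g hg (fun i hi => hvan i (mem_insert_of_mem hi))
      have hprod_ne : eval (α a) (∏ i ∈ s, linForm K (c i)) ≠ 0 := by
        rw [map_prod]
        exact Finset.prod_ne_zero_iff.mpr
          (fun i hi => hLne i a (fun hia => ha (hia ▸ hi)))
      have hha : eval (α a) h = 0 := by
        have hv := hvan a (mem_insert_self a s)
        rw [heq, map_mul] at hv
        exact (mul_eq_zero.mp hv).resolve_left hprod_ne
      obtain ⟨h', hh', heq'⟩ := factor_step hh (hc a) (hα a) (hzero a) hha
      refine ⟨h', ?_, ?_⟩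
      · have hcard : (insert a s).card = s.card + 1 := Finset.card_insert_of_notMem ha
        rw [hcard, ← Nat.sub_sub]
        exact hh'
      · rw [Finset.prod_insert ha, heq, heq']
        ring

end Aux

/-- If `φ` kills `L₁⋯L_r · S_{d-r}` with the `L_i` pairwise non-proportional linear forms
with zeros `α_i`, then `φ` is a linear combination of the evaluations at the `α_i`. -/
theorem stmt2 (K : Type) [Field K] [IsAlgClosed K] [CharZero K] (d r : ℕ) (hr : r ≤ d)
    (φ : Module.Dual K (MvPolynomial (Fin 2) K))
    (c : Fin r → Fin 2 → K) (α : Fin r → Fin 2 → K)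
    (hc : ∀ i, c i ≠ 0) (hnp : ∀ i j, i ≠ j → NonProp K (c i) (c j))
    (hα : ∀ i, α i ≠ 0) (hzero : ∀ i, eval (α i) (linForm K (c i)) = 0)
    (hφ : ∀ g : MvPolynomial (Fin 2) K, g.IsHomogeneous (d - r) →
      φ ((∏ i, linForm K (c i)) * g) = 0) :
    ∃ lam : Fin r → K, ∀ f : MvPolynomial (Fin 2) K, f.IsHomogeneous d →
      φ f = ∑ i, lam i * eval (α i) f := by
  classical
  rcases Nat.eq_zero_or_pos r with hr0 | hr1
  · subst hr0
    refine ⟨fun _ => 0, fun f hf => ?_⟩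
    have h1 := hφ f (by simpa using hf)
    simpa using h1
  -- pairwise nonvanishing of the linear forms at the other points
  have hLne : ∀ i j, i ≠ j → eval (α j) (linForm K (c i)) ≠ 0 := by
    intro i j hij h0
    rw [eval_linForm] at h0
    have hj := hzero j
    rw [eval_linForm] at hj
    obtain ⟨t, ht⟩ := line_lemma (c := α j) (v := c j) (x := c i) (hα j) (hc j)
      (by linear_combination hj) (by linear_combination h0)
    exact hnp i j hij t ht
  -- auxiliary linear forms not vanishing at the own point
  set m : Fin r → Fin 2 → K := fun i => if α i 0 ≠ 0 then ![1, 0] else ![0, 1] with hm_def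
  have hm : ∀ i, eval (α i) (linForm K (m i)) ≠ 0 := by
    intro i
    by_cases h : α i 0 = 0
    · have h1 : α i 1 ≠ 0 := (fin2_ne_zero (hα i)).resolve_left (not_not.mpr h)
      have hmi : m i = ![0, 1] := by simp [hm_def, h]
      rw [hmi, eval_linForm]
      simpa using h1
    · have hmi : m i = ![1, 0] := by simp [hm_def, h]
      rw [hmi, eval_linForm]
      simpa using h
  -- the interpolation polynomials
  set P : Fin r → MvPolynomial (Fin 2) K := fun i =>
    (∏ j ∈ univ.erase i, linForm K (c j)) * (linForm K (m i)) ^ (d - r + 1) with hP_def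
  have hPhom : ∀ i, (P i).IsHomogeneous d := by
    intro i
    have h1 : (∏ j ∈ univ.erase i, linForm K (c j)).IsHomogeneous (∑ _j ∈ univ.erase i, 1) :=
      IsHomogeneous.prod _ _ _ (fun j _ => linForm_isHomogeneous (c j))
    have h2 : ((linForm K (m i)) ^ (d - r + 1)).IsHomogeneous (1 * (d - r + 1)) :=
      (linForm_isHomogeneous (m i)).pow _
    have h3 := h1.mul h2
    have hcard : (∑ _j ∈ univ.erase i, 1) + 1 * (d - r + 1) = d := by
      rw [Finset.sum_const, smul_eq_mul, mul_one, card_erase_of_mem (mem_univ i),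
        card_univ, Fintype.card_fin]
      omega
    rwa [hcard] at h3
  -- values of P i at the points
  set v : Fin r → K := fun i => eval (α i) (P i) with hv_def
  have hvne : ∀ i, v i ≠ 0 := by
    intro i
    rw [hv_def]
    simp only [hP_def, map_mul, map_prod, map_pow]
    refine mul_ne_zero ?_ (pow_ne_zero _ (hm i))
    refine Finset.prod_ne_zero_iff.mpr (fun j hj => ?_)
    exact hLne j i (Finset.mem_erase.mp hj).1
  have hPzero : ∀ i j, j ≠ i → eval (α j) (P i) = 0 := by
    intro i j hji
    simp only [hP_def, map_mul, map_prod]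
    refine mul_eq_zero_of_left ?_ _
    exact Finset.prod_eq_zero (Finset.mem_erase.mpr ⟨hji, mem_univ j⟩) (hzero j)
  refine ⟨fun i => (v i)⁻¹ * φ (P i), fun f hf => ?_⟩
  set g : MvPolynomial (Fin 2) K :=
    f - ∑ i, C ((v i)⁻¹ * eval (α i) f) * P i with hg_def
  have hghom : g.IsHomogeneous d :=
    hf.sub (IsHomogeneous.sum _ _ _ (fun i _ => (hPhom i).C_mul _))
  have hgvan : ∀ j, eval (α j) g = 0 := by
    intro j
    rw [hg_def, map_sub, map_sum]
    have hterm : ∀ i, eval (α j) (C ((v i)⁻¹ * eval (α i) f) * P i) =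
        ((v i)⁻¹ * eval (α i) f) * eval (α j) (P i) := by
      intro i; rw [map_mul, eval_C]
    rw [Finset.sum_congr rfl (fun i _ => hterm i)]
    rw [Finset.sum_eq_single j (fun i _ hij => by rw [hPzero i j (Ne.symm hij), mul_zero])
      (fun hj => absurd (mem_univ j) hj)]
    have hvj : eval (α j) (P j) = v j := rfl
    rw [hvj]
    have : (v j)⁻¹ * eval (α j) f * v j = eval (α j) f := by
      rw [mul_comm ((v j)⁻¹) _, mul_assoc, inv_mul_cancel₀ (hvne j), mul_one]
    rw [this, sub_self]
  obtain ⟨h, hh, heq⟩ := div_many c α hc hα hzero hLne univ g hghom (fun i _ => hgvan i)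
  rw [card_univ, Fintype.card_fin] at hh
  have hφg : φ g = 0 := by rw [heq]; exact hφ h hh
  have hf_eq : f = g + ∑ i, C ((v i)⁻¹ * eval (α i) f) * P i := by
    rw [hg_def]; ring
  conv_lhs => rw [hf_eq]
  rw [map_add, hφg, zero_add, map_sum]
  refine Finset.sum_congr rfl (fun i _ => ?_)
  rw [← smul_eq_C_mul, map_smul, smul_eq_mul]
  ring
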